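/- Let κ ⊆ σ be integral cones in a lattice L. Then σ − κ = σ − mf(κ), where mf(κ) = σ ∩ (κ − σ) is the minimal face of σ containing κ. Moreover, the map τ ↦ σ − τ is an order-reversing bijection from the set of faces of σ (ordered by inclusion) onto the set of cofaces of σ (ordered by the coface relation): τ ⊆ τ′ if and only if σ − τ′ is a coface of σ − τ, and the inverse map sends a coface κ of σ to (κ ∩ (−κ)) ∩ σ. -/

import Mathlib

open Pointwise

/-- An integral cone in `L`: a subset containing `0` and closed under addition. -/
def IsCone {L : Type*} [AddCommMonoid L] (σ : Set L) : Prop :=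
  0 ∈ σ ∧ ∀ a ∈ σ, ∀ b ∈ σ, a + b ∈ σ

/-- A face of a cone `σ`: a nonempty subset `τ ⊆ σ` such that for `a, b ∈ σ`,
`a + b ∈ τ` if and only if `a ∈ τ` and `b ∈ τ`. -/
def IsFace {L : Type*} [AddCommMonoid L] (σ τ : Set L) : Prop :=
  τ.Nonempty ∧ τ ⊆ σ ∧ ∀ a ∈ σ, ∀ b ∈ σ, (a + b ∈ τ ↔ a ∈ τ ∧ b ∈ τ)

/-- `σ'` is a coface of `σ`: the localisation `σ − κ` of `σ` at a subcone
`κ ⊆ σ`. -/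
def IsCoface {L : Type*} [AddCommGroup L] (σ' σ : Set L) : Prop :=
  ∃ κ : Set L, IsCone κ ∧ κ ⊆ σ ∧ σ' = σ - κ

section Aux
variable {L : Type*} [AddCommGroup L] {σ τ κ : Set L}

lemma zero_mem_face (hσ : IsCone σ) (hτ : IsFace σ τ) : (0:L) ∈ τ := by
  obtain ⟨⟨t, ht⟩, hsub, hface⟩ := hτ
  exact ((hface t (hsub ht) 0 hσ.1).mp (by simpa using ht)).2

lemma face_add (hτ : IsFace σ τ) {a b : L} (ha : a ∈ τ) (hb : b ∈ τ) : a + b ∈ τ :=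
  (hτ.2.2 a (hτ.2.1 ha) b (hτ.2.1 hb)).mpr ⟨ha, hb⟩

lemma part1 (hσ : IsCone σ) (hκ : IsCone κ) (hsub : κ ⊆ σ) :
    σ - κ = σ - (σ ∩ (κ - σ)) := by
  ext x
  simp only [Set.mem_sub, Set.mem_inter_iff]
  constructor
  · rintro ⟨s, hs, k, hk, rfl⟩
    exact ⟨s, hs, k, ⟨hsub hk, ⟨k, hk, 0, hσ.1, by simp⟩⟩, rfl⟩
  · rintro ⟨s, hs, m, ⟨hmσ, k, hk, s', hs', hks'⟩, rfl⟩
    exact ⟨s + s', hσ.2 s hs s' hs', k, hk, by rw [← hks']; abel⟩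

lemma face_mf (hσ : IsCone σ) (hκ : IsCone κ) (hsub : κ ⊆ σ) :
    IsFace σ (σ ∩ (κ - σ)) := by
  refine ⟨⟨0, hσ.1, ⟨0, hκ.1, 0, hσ.1, by simp⟩⟩, Set.inter_subset_left, ?_⟩
  intro a ha b hb
  simp only [Set.mem_inter_iff, Set.mem_sub]
  constructor
  · rintro ⟨hab, k, hk, s, hs, hks⟩
    refine ⟨⟨ha, k, hk, s + b, hσ.2 s hs b hb, ?_⟩, ⟨hb, k, hk, s + a, hσ.2 s hs a ha, ?_⟩⟩
    · calc k - (s + b) = (k - s) - b := by abel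
        _ = a := by rw [hks]; abel
    · calc k - (s + a) = (k - s) - a := by abel
        _ = b := by rw [hks]; abel
  · rintro ⟨⟨haσ, k, hk, s, hs, hks⟩, ⟨hbσ, k', hk', s', hs', hks'⟩⟩
    refine ⟨hσ.2 a ha b hb, k + k', hκ.2 k hk k' hk', s + s', hσ.2 s hs s' hs', ?_⟩
    rw [show k + k' - (s + s') = (k - s) + (k' - s') by abel, hks, hks']

lemma left_inv (hσ : IsCone σ) (hτ : IsFace σ τ) :
    ((σ - τ) ∩ (-(σ - τ))) ∩ σ = τ := by
  have h0 : (0:L) ∈ τ := zero_mem_face hσ hτ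
  obtain ⟨hne, hsub, hface⟩ := hτ
  ext x
  simp only [Set.mem_inter_iff, Set.mem_neg, Set.mem_sub]
  constructor
  · rintro ⟨⟨-, s', hs', t', ht', hst'⟩, hx⟩
    have h1 : x = t' - s' := by rw [← neg_neg x, ← hst']; abel
    have hxs : x + s' = t' := by rw [h1]; abel
    exact ((hface x hx s' hs').mp (by rw [hxs]; exact ht')).1
  · intro hx
    exact ⟨⟨⟨x, hsub hx, 0, h0, by simp⟩, ⟨0, hσ.1, x, hx, by abel⟩⟩, hsub hx⟩

lemma mono (hσ : IsCone σ) {τ' : Set L} (hτ : IsFace σ τ) (hτ' : IsFace σ τ')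
    (h : σ - τ ⊆ σ - τ') : τ ⊆ τ' := by
  intro t ht
  rw [← left_inv hσ hτ']
  refine ⟨⟨h ⟨t, hτ.2.1 ht, 0, zero_mem_face hσ hτ, by simp⟩, ?_⟩, hτ.2.1 ht⟩
  exact h ⟨0, hσ.1, t, ht, by abel⟩
end Aux

/-- `σ − κ = σ − mf(κ)` where `mf(κ) = σ ∩ (κ − σ)`, and
`τ ↦ σ − τ` is an order-reversing bijection from faces of `σ` onto cofaces of
`σ`, with inverse `κ ↦ (κ ∩ (−κ)) ∩ σ`. -/
theorem stmt5
    {L : Type*} [AddCommGroup L] [Module.Free ℤ L] [Module.Finite ℤ L]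
    (σ : Set L) (hσ : IsCone σ) :
    -- localising at a subcone is localising at its minimal face
    (∀ κ : Set L, IsCone κ → κ ⊆ σ → σ - κ = σ - (σ ∩ (κ - σ))) ∧
    -- order-reversing
    (∀ τ τ' : Set L, IsFace σ τ → IsFace σ τ' →
      (τ ⊆ τ' ↔ IsCoface (σ - τ') (σ - τ))) ∧
    -- `(κ ∩ (−κ)) ∩ σ` is a left inverse of `τ ↦ σ − τ`
    (∀ τ : Set L, IsFace σ τ → ((σ - τ) ∩ (-(σ - τ))) ∩ σ = τ) ∧
    -- and a right inverse: every coface arises from a face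
    (∀ κ : Set L, IsCoface κ σ →
      IsFace σ ((κ ∩ (-κ)) ∩ σ) ∧ σ - ((κ ∩ (-κ)) ∩ σ) = κ) := by
  refine ⟨fun κ hκ hsub => part1 hσ hκ hsub, ?_, fun τ hτ => left_inv hσ hτ, ?_⟩
  · intro τ τ' hτ hτ'
    constructor
    · intro hss
      refine ⟨τ' - τ, ⟨⟨0, zero_mem_face hσ hτ', 0, zero_mem_face hσ hτ, by simp⟩, ?_⟩, ?_, ?_⟩
      · rintro a ⟨t₁, ht₁, t₂, ht₂, rfl⟩ b ⟨t₃, ht₃, t₄, ht₄, rfl⟩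
        exact ⟨t₁ + t₃, face_add hτ' ht₁ ht₃, t₂ + t₄, face_add hτ ht₂ ht₄, add_sub_add_comm t₁ t₃ t₂ t₄⟩
      · rintro a ⟨t₁, ht₁, t₂, ht₂, rfl⟩
        exact ⟨t₁, hτ'.2.1 ht₁, t₂, ht₂, rfl⟩
      · ext x
        simp only [Set.mem_sub]
        constructor
        · rintro ⟨s, hs, t', ht', rfl⟩
          exact ⟨s, ⟨s, hs, 0, zero_mem_face hσ hτ, by simp⟩, t' - 0,
            ⟨t', ht', 0, zero_mem_face hσ hτ, rfl⟩, by abel⟩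
        · rintro ⟨y, ⟨s, hs, t, ht, rfl⟩, z, ⟨t₁, ht₁, t₂, ht₂, rfl⟩, rfl⟩
          exact ⟨s + t₂, hσ.2 s hs t₂ (hτ.2.1 ht₂), t + t₁,
            face_add hτ' (hss ht) ht₁, by abel⟩
    · rintro ⟨κ', hκ', hsub', heq⟩
      refine mono hσ hτ hτ' ?_
      rw [heq]
      intro x hx
      exact ⟨x, hx, 0, hκ'.1, by simp⟩
  · rintro κ ⟨τ₀, hτ₀, hsub₀, rfl⟩
    have hface := face_mf hσ hτ₀ hsub₀
    have heq : σ - τ₀ = σ - (σ ∩ (τ₀ - σ)) := part1 hσ hτ₀ hsub₀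
    rw [heq, left_inv hσ hface]
    exact ⟨hface, rfl⟩
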